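/- Let H and B be symmetric positive definite real n×n matrices, θ₀, θ* ∈ ℝⁿ, and α > 0 with 2α·λ_max(H^{1/2}B⁻¹H^{1/2}) < 1. Set Δ₀ = θ₀−θ*, h(θ₀) = ½Δ₀ᵀHΔ₀, M = I − αB⁻¹H, and for k ≥ 0 let ē_k = (1/(k+1))·Σ_{i=0}^{k} M^i Δ₀. Then ½·ē_kᵀ H ē_k ≤ min{ (1/(2(k+1)²α²))·‖H^{−1/2}BΔ₀‖², (1/(2(k+1)α))·‖B^{1/2}Δ₀‖², h(θ₀) }. -/

import Mathlib

open Matrix Finset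

private lemma mysymdot {n : ℕ} {A : Matrix (Fin n) (Fin n) ℝ} (hA : Aᵀ = A)
    (x y : Fin n → ℝ) : x ⬝ᵥ (A *ᵥ y) = (A *ᵥ x) ⬝ᵥ y := by
  have h : x ᵥ* A = A *ᵥ x := by conv_lhs => rw [← hA]
                                 rw [Matrix.vecMul_transpose]
  rw [dotProduct_mulVec, h]

private lemma myconj_mul {n : ℕ} {U : Matrix (Fin n) (Fin n) ℝ} (hU : Uᵀ * U = 1)
    (d e : Fin n → ℝ) :
    (U * diagonal d * Uᵀ) * (U * diagonal e * Uᵀ)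
      = U * diagonal (fun j => d j * e j) * Uᵀ := by
  simp only [Matrix.mul_assoc]
  rw [show Uᵀ * (U * (diagonal e * Uᵀ)) = diagonal e * Uᵀ by
    rw [← Matrix.mul_assoc, hU, Matrix.one_mul]]
  rw [← Matrix.mul_assoc (diagonal d), Matrix.diagonal_mul_diagonal]

private lemma mydiag_sum {n m : ℕ} (ds : ℕ → Fin n → ℝ) :
    ∑ i ∈ range m, diagonal (ds i) = diagonal (fun j => ∑ i ∈ range m, ds i j) := by
  ext a b
  by_cases h : a = b <;> simp [Matrix.diagonal_apply, Matrix.sum_apply, h]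

private lemma myconj_dot {n : ℕ} {U : Matrix (Fin n) (Fin n) ℝ} (hU : Uᵀ * U = 1)
    (d e w : Fin n → ℝ) :
    ((U * diagonal d) *ᵥ w) ⬝ᵥ ((U * diagonal e) *ᵥ w)
      = ∑ j, d j * e j * (w j)^2 := by
  rw [← Matrix.mulVec_mulVec, ← Matrix.mulVec_mulVec (M := U),
    dotProduct_mulVec, Matrix.vecMul_mulVec, hU, Matrix.vecMul_one,
    dotProduct_mulVec]
  simp only [dotProduct, Matrix.vecMul_diagonal, Matrix.mulVec_diagonal]
  exact Finset.sum_congr rfl fun j _ => by ring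

private lemma myarith1 {K a l t : ℝ} (hK : K ≠ 0) (ha : a ≠ 0) (hl : l ≠ 0) :
    (1 / (2 * K ^ 2 * a ^ 2)) * (l⁻¹ * l⁻¹ * t)
      = (1/2) * ((1/(K * a * l)) * (1/(K * a * l)) * t) := by
  field_simp

private lemma myarith2 {K a l t : ℝ} (hK : K ≠ 0) (ha : a ≠ 0) (hl : l ≠ 0) :
    (1 / (2 * K * a)) * (1 * l⁻¹ * t)
      = (1/2) * ((1 * (1/(K * a * l))) * t) := by
  field_simp

/-- The square root of a positive semi-definite matrix, with its Mathlib (Dec 2024) definition. -/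
noncomputable def Matrix.PosSemidef.sqrt {n : Type*} [Fintype n] [DecidableEq n]
    {A : Matrix n n ℝ} (hA : A.PosSemidef) : Matrix n n ℝ :=
  (hA.1.eigenvectorUnitary : Matrix n n ℝ) * diagonal ((√·) ∘ hA.1.eigenvalues) *
    (star (hA.1.eigenvectorUnitary : Matrix n n ℝ))

private lemma mysqrt_isHermitian {n : ℕ} {A : Matrix (Fin n) (Fin n) ℝ} (hA : A.PosSemidef) :
    hA.sqrt.IsHermitian := by
  unfold Matrix.PosSemidef.sqrt
  simp [Matrix.IsHermitian, Matrix.conjTranspose_mul, Matrix.mul_assoc, Matrix.star_eq_conjTranspose,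
    Matrix.conjTranspose_eq_transpose_of_trivial]

private lemma mysqrt_mul_self {n : ℕ} {A : Matrix (Fin n) (Fin n) ℝ} (hA : A.PosSemidef) :
    hA.sqrt * hA.sqrt = A := by
  have hU : star (hA.1.eigenvectorUnitary : Matrix (Fin n) (Fin n) ℝ)
      * (hA.1.eigenvectorUnitary : Matrix (Fin n) (Fin n) ℝ) = 1 :=
    (Matrix.mem_unitaryGroup_iff').mp hA.1.eigenvectorUnitary.2
  have hspec := hA.1.spectral_theorem
  unfold Matrix.PosSemidef.sqrt
  set U := (hA.1.eigenvectorUnitary : Matrix (Fin n) (Fin n) ℝ)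
  conv_rhs => rw [hspec]
  simp only [Unitary.conjStarAlgAut_apply, Matrix.mul_assoc]
  rw [show ∀ X : Matrix (Fin n) (Fin n) ℝ, star U * (U * X) = X from fun X => by
    rw [← Matrix.mul_assoc, hU, Matrix.one_mul]]
  rw [← Matrix.mul_assoc (diagonal _), Matrix.diagonal_mul_diagonal]
  congr 3
  funext j
  simp [Real.mul_self_sqrt (hA.eigenvalues_nonneg j)]

set_option maxHeartbeats 1000000 in
/-- For `ē_k = (1/(k+1)) Σ_{i=0}^k M^i Δ₀` with `M = I − αB⁻¹H`,
`½ ē_kᵀ H ē_k ≤ min{ ‖H^{−1/2}BΔ₀‖²/(2(k+1)²α²), ‖B^{1/2}Δ₀‖²/(2(k+1)α), h(θ₀) }`. -/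
theorem averaged_mean_error_bound {n : ℕ} (hn : 0 < n)
    (H B : Matrix (Fin n) (Fin n) ℝ)
    (θ0 θs : Fin n → ℝ) (α : ℝ) (hα : 0 < α)
    (hH : H.PosDef) (hB : B.PosDef)
    (hSym : (hH.posSemidef.sqrt * B⁻¹ * hH.posSemidef.sqrt).IsHermitian)
    (hlr : 2 * α * (⨆ i, hSym.eigenvalues i) < 1)
    (k : ℕ) :
    let Δ0 : Fin n → ℝ := θ0 - θs
    let M : Matrix (Fin n) (Fin n) ℝ := 1 - α • (B⁻¹ * H)
    let ebar : Fin n → ℝ :=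
      (1 / ((k : ℝ) + 1)) • (∑ i ∈ Finset.range (k + 1), M ^ i).mulVec Δ0
    let h0 : ℝ := (1 / 2) * (Δ0 ⬝ᵥ H.mulVec Δ0)
    let v1 : Fin n → ℝ := (hH.posSemidef.sqrt)⁻¹.mulVec (B.mulVec Δ0)
    let v2 : Fin n → ℝ := hB.posSemidef.sqrt.mulVec Δ0
    (1 / 2) * (ebar ⬝ᵥ H.mulVec ebar)
      ≤ min (min ((1 / (2 * ((k : ℝ) + 1) ^ 2 * α ^ 2)) * (v1 ⬝ᵥ v1))
              ((1 / (2 * ((k : ℝ) + 1) * α)) * (v2 ⬝ᵥ v2)))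
          h0 := by
  intro Δ0 M ebar h0 v1 v2
  classical
  set S := hH.posSemidef.sqrt with hSdef
  -- basic facts about S
  have hSsym : Sᵀ = S := by
    have h := mysqrt_isHermitian hH.posSemidef
    rwa [Matrix.IsHermitian, Matrix.conjTranspose_eq_transpose_of_trivial] at h
  have hSS : S * S = H := mysqrt_mul_self hH.posSemidef
  have hHdet : IsUnit H.det := hH.det_pos.ne'.isUnit
  have hSdet : IsUnit S.det := by
    have : S.det * S.det = H.det := by rw [← Matrix.det_mul, hSS]
    rcases eq_or_ne S.det 0 with h | h
    · rw [h, mul_zero] at this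
      exact absurd this.symm hH.det_pos.ne'
    · exact h.isUnit
  have hBdet : IsUnit B.det := hB.det_pos.ne'.isUnit
  -- T := S * B⁻¹ * S is positive definite
  have hTpd : (S * B⁻¹ * S).PosDef := by
    refine Matrix.PosDef.of_dotProduct_mulVec_pos hSym fun x hx => ?_
    have hSx : S *ᵥ x ≠ 0 := by
      intro hzero
      have hinj := Matrix.mulVec_injective_iff_isUnit.mpr
        ((Matrix.isUnit_iff_isUnit_det S).mpr hSdet)
      exact hx (hinj (by simpa using hzero))
    have hmv : (S * B⁻¹ * S) *ᵥ x = S *ᵥ (B⁻¹ *ᵥ (S *ᵥ x)) := by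
      rw [← Matrix.mulVec_mulVec, ← Matrix.mulVec_mulVec]
    have hpos := hB.inv.dotProduct_mulVec_pos hSx
    simp only [star_trivial] at hpos ⊢
    rw [hmv, mysymdot hSsym]
    exact hpos
  set lam := hSym.eigenvalues with hlamdef
  have hlampos : ∀ j, 0 < lam j := fun j => hTpd.eigenvalues_pos j
  have hlamhalf : ∀ j, α * lam j < 1 / 2 := by
    intro j
    have hb : BddAbove (Set.range lam) := (Set.finite_range lam).bddAbove
    have hle : lam j ≤ ⨆ i, lam i := le_ciSup hb j
    have h2 : α * lam j ≤ α * ⨆ i, lam i := by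
      exact mul_le_mul_of_nonneg_left hle hα.le
    linarith
  set U := (hSym.eigenvectorUnitary : Matrix (Fin n) (Fin n) ℝ) with hUdef
  have hU2 : U * Uᵀ = 1 := by
    have h := (Matrix.mem_unitaryGroup_iff).mp (hSym.eigenvectorUnitary).2
    rwa [Matrix.star_eq_conjTranspose, Matrix.conjTranspose_eq_transpose_of_trivial] at h
  have hU1 : Uᵀ * U = 1 := mul_eq_one_comm.mp hU2
  have hspec : S * B⁻¹ * S = U * diagonal lam * Uᵀ := by
    have h := hSym.spectral_theorem
    rwa [Unitary.conjStarAlgAut_apply, Matrix.star_eq_conjTranspose, Matrix.conjTranspose_eq_transpose_of_trivial,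
      show RCLike.ofReal ∘ hSym.eigenvalues = lam from funext fun j => by simp [hlamdef]] at h
  have hone : U * diagonal (fun _ : Fin n => (1:ℝ)) * Uᵀ = 1 := by
    rw [Matrix.diagonal_one, Matrix.mul_one, hU2]
  -- N := U * diagonal (1 - α λ) * Uᵀ
  set N : Matrix (Fin n) (Fin n) ℝ := U * diagonal (fun j => 1 - α * lam j) * Uᵀ with hNdef
  have hNT : 1 - α • (S * B⁻¹ * S) = N := by
    have hd : diagonal (fun j => 1 - α * lam j)
        = (1 : Matrix (Fin n) (Fin n) ℝ) - α • diagonal lam := by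
      ext a b
      by_cases hab : a = b <;> simp [Matrix.diagonal_apply, hab, Matrix.one_apply]
    rw [hspec, hNdef, hd]
    simp only [Matrix.mul_sub, Matrix.sub_mul, Matrix.mul_one, Matrix.smul_mul,
      Matrix.mul_smul, hU2]
  have hSM : S * M = N * S := by
    have hM' : M = 1 - α • (B⁻¹ * H) := rfl
    rw [← hNT, hM', ← hSS]
    simp only [Matrix.mul_sub, Matrix.sub_mul, Matrix.mul_one, Matrix.one_mul,
      Matrix.mul_smul, Matrix.smul_mul, Matrix.mul_assoc]
  have hSMpow : ∀ i, S * M ^ i = N ^ i * S := by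
    intro i
    induction i with
    | zero => simp
    | succ i ih =>
      rw [pow_succ, ← Matrix.mul_assoc, ih, Matrix.mul_assoc, hSM, ← Matrix.mul_assoc,
        ← pow_succ]
  have hNpow : ∀ i, N ^ i = U * diagonal (fun j => (1 - α * lam j)^i) * Uᵀ := by
    intro i
    induction i with
    | zero =>
      simp only [pow_zero]
      rw [Matrix.diagonal_one, Matrix.mul_one, hU2]
    | succ i ih =>
      rw [pow_succ, ih, hNdef, myconj_mul hU1]
      simp only [← pow_succ]
  have hNsum : ∑ i ∈ range (k+1), N ^ i
      = U * diagonal (fun j => ∑ i ∈ range (k+1), (1 - α * lam j)^i) * Uᵀ :=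
    calc ∑ i ∈ range (k+1), N ^ i
        = ∑ i ∈ range (k+1), U * diagonal (fun j => (1 - α * lam j)^i) * Uᵀ :=
          Finset.sum_congr rfl fun i _ => hNpow i
      _ = _ := by rw [← Finset.sum_mul, ← Matrix.mul_sum, mydiag_sum]
  set u : Fin n → ℝ := S *ᵥ Δ0 with hudef
  set w : Fin n → ℝ := Uᵀ *ᵥ u with hwdef
  have hdotu : ∀ d e : Fin n → ℝ,
      ((U * diagonal d * Uᵀ) *ᵥ u) ⬝ᵥ ((U * diagonal e * Uᵀ) *ᵥ u)
        = ∑ j, d j * e j * (w j)^2 := by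
    intro d e
    rw [← Matrix.mulVec_mulVec (M := U * diagonal d),
      ← Matrix.mulVec_mulVec (M := U * diagonal e), ← hwdef]
    exact myconj_dot hU1 d e w
  set K : ℝ := (k : ℝ) + 1 with hKdef
  have hK : 0 < K := by rw [hKdef]; positivity
  set F : Fin n → ℝ := fun j => (1/K) * ∑ i ∈ range (k+1), (1 - α * lam j)^i with hFdef
  have hSe : S *ᵥ ebar = (U * diagonal F * Uᵀ) *ᵥ u := by
    have he : ebar = (1/K) • ((∑ i ∈ range (k+1), M ^ i) *ᵥ Δ0) := rfl
    have hS2 : S * ∑ i ∈ range (k+1), M ^ i = (∑ i ∈ range (k+1), N ^ i) * S := by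
      rw [Matrix.mul_sum, Finset.sum_mul]
      exact Finset.sum_congr rfl fun i _ => hSMpow i
    have hdF : diagonal F
        = (1/K) • diagonal (fun j => ∑ i ∈ range (k+1), (1 - α * lam j)^i) := by
      rw [← Matrix.diagonal_smul]; rfl
    rw [he, Matrix.mulVec_smul, Matrix.mulVec_mulVec, hS2, hNsum, ← Matrix.mulVec_mulVec,
      ← hudef, ← Matrix.smul_mulVec]
    congr 1
    rw [hdF]
    simp only [Matrix.mul_smul, Matrix.smul_mul]
  have hLHS : ebar ⬝ᵥ H *ᵥ ebar = ∑ j, F j * F j * (w j)^2 := by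
    rw [← hSS, ← Matrix.mulVec_mulVec, mysymdot hSsym, hSe]
    exact hdotu F F
  have hTinv : (S * B⁻¹ * S)⁻¹ = U * diagonal (fun j => (lam j)⁻¹) * Uᵀ := by
    apply Matrix.inv_eq_right_inv
    rw [hspec, myconj_mul hU1,
      show (fun j => lam j * (lam j)⁻¹) = fun _ : Fin n => (1:ℝ) from
        funext fun j => mul_inv_cancel₀ (hlampos j).ne',
      Matrix.diagonal_one, Matrix.mul_one, hU2]
  have hTinv2 : (S * B⁻¹ * S)⁻¹ = S⁻¹ * (B * S⁻¹) := by
    rw [Matrix.mul_inv_rev, Matrix.mul_inv_rev, Matrix.nonsing_inv_nonsing_inv B hBdet]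
  have hv1 : v1 ⬝ᵥ v1 = ∑ j, (lam j)⁻¹ * (lam j)⁻¹ * (w j)^2 := by
    have h1 : v1 = (S * B⁻¹ * S)⁻¹ *ᵥ u := by
      have h2 : v1 = S⁻¹ *ᵥ (B *ᵥ Δ0) := rfl
      have h3 : (S⁻¹ * (B * S⁻¹)) * S = S⁻¹ * B := by
        simp only [Matrix.mul_assoc, Matrix.nonsing_inv_mul S hSdet, Matrix.mul_one]
      rw [h2, hTinv2, hudef, Matrix.mulVec_mulVec, Matrix.mulVec_mulVec, h3]
    rw [h1, hTinv]
    exact hdotu _ _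
  have hu1 : u = (U * diagonal (fun _ : Fin n => (1:ℝ)) * Uᵀ) *ᵥ u := by
    rw [hone, Matrix.one_mulVec]
  have huTu : u ⬝ᵥ ((S * B⁻¹ * S)⁻¹ *ᵥ u) = ∑ j, 1 * (lam j)⁻¹ * (w j)^2 := by
    calc u ⬝ᵥ ((S * B⁻¹ * S)⁻¹ *ᵥ u)
        = ((U * diagonal (fun _ : Fin n => (1:ℝ)) * Uᵀ) *ᵥ u)
            ⬝ᵥ ((U * diagonal (fun j => (lam j)⁻¹) * Uᵀ) *ᵥ u) := by rw [← hu1, hTinv]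
      _ = _ := hdotu _ _
  have hQsym : (hB.posSemidef.sqrt)ᵀ = hB.posSemidef.sqrt := by
    have h := mysqrt_isHermitian hB.posSemidef
    rwa [Matrix.IsHermitian, Matrix.conjTranspose_eq_transpose_of_trivial] at h
  have hv2 : v2 ⬝ᵥ v2 = ∑ j, 1 * (lam j)⁻¹ * (w j)^2 := by
    have h1 : v2 ⬝ᵥ v2 = Δ0 ⬝ᵥ (B *ᵥ Δ0) := by
      have h2 : v2 = hB.posSemidef.sqrt *ᵥ Δ0 := rfl
      rw [h2, ← mysymdot hQsym, Matrix.mulVec_mulVec, mysqrt_mul_self hB.posSemidef]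
    have hB2 : B = S * ((S * B⁻¹ * S)⁻¹ * S) := by
      rw [hTinv2]
      calc B = (S * S⁻¹) * (B * (S⁻¹ * S)) := by
            rw [Matrix.mul_nonsing_inv S hSdet, Matrix.nonsing_inv_mul S hSdet,
              Matrix.mul_one, Matrix.one_mul]
        _ = S * (S⁻¹ * (B * S⁻¹) * S) := by simp only [Matrix.mul_assoc]
    rw [h1, hB2, ← Matrix.mulVec_mulVec, mysymdot hSsym, ← hudef,
      ← Matrix.mulVec_mulVec, ← hudef]
    exact huTu
  have hh0 : Δ0 ⬝ᵥ H *ᵥ Δ0 = ∑ j, (1:ℝ) * 1 * (w j)^2 := by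
    rw [← hSS, ← Matrix.mulVec_mulVec, mysymdot hSsym, ← hudef]
    calc u ⬝ᵥ u = ((U * diagonal (fun _ : Fin n => (1:ℝ)) * Uᵀ) *ᵥ u)
          ⬝ᵥ ((U * diagonal (fun _ : Fin n => (1:ℝ)) * Uᵀ) *ᵥ u) := by rw [← hu1]
      _ = _ := hdotu _ _
  -- scalar bounds on F
  have hF0 : ∀ j, 0 ≤ F j := by
    intro j
    have hμ0 : (0:ℝ) ≤ 1 - α * lam j := by nlinarith [hlamhalf j]
    exact mul_nonneg (by positivity)
      (Finset.sum_nonneg fun i _ => pow_nonneg hμ0 i)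
  have hF1 : ∀ j, F j ≤ 1 := by
    intro j
    have hμ0 : (0:ℝ) ≤ 1 - α * lam j := by nlinarith [hlamhalf j]
    have hμ1 : 1 - α * lam j ≤ 1 := by nlinarith [hlampos j, hα]
    have hsum' : ∑ i ∈ range (k+1), (1 - α * lam j)^i ≤ K := by
      calc ∑ i ∈ range (k+1), (1 - α * lam j)^i
          ≤ ∑ _i ∈ range (k+1), (1:ℝ) :=
            Finset.sum_le_sum fun i _ => pow_le_one₀ hμ0 hμ1
        _ = K := by
            rw [Finset.sum_const, Finset.card_range, nsmul_eq_mul, mul_one, hKdef]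
            push_cast
            ring
    calc F j = (1/K) * ∑ i ∈ range (k+1), (1 - α * lam j)^i := rfl
      _ ≤ (1/K) * K := mul_le_mul_of_nonneg_left hsum' (by positivity)
      _ = 1 := by field_simp
  have hF2 : ∀ j, F j ≤ 1 / (K * α * lam j) := by
    intro j
    have hal : 0 < α * lam j := mul_pos hα (hlampos j)
    have hμ0 : (0:ℝ) ≤ 1 - α * lam j := by nlinarith [hlamhalf j]
    have hp : (0:ℝ) ≤ (1 - α * lam j)^(k+1) := pow_nonneg hμ0 _
    have hgs := geom_sum_mul (1 - α * lam j) (k+1)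
    have heq : (∑ i ∈ range (k+1), (1 - α * lam j)^i) * (α * lam j)
        = 1 - (1 - α * lam j)^(k+1) := by linear_combination -hgs
    have hSig : (∑ i ∈ range (k+1), (1 - α * lam j)^i) ≤ 1/(α * lam j) := by
      rw [le_div_iff₀ hal]
      linarith
    calc F j = (1/K) * ∑ i ∈ range (k+1), (1 - α * lam j)^i := rfl
      _ ≤ (1/K) * (1/(α * lam j)) := mul_le_mul_of_nonneg_left hSig (by positivity)
      _ = 1/(K * α * lam j) := by rw [div_mul_div_comm, one_mul, ← mul_assoc]
  have hw2 : ∀ j, (0:ℝ) ≤ (w j)^2 := fun j => sq_nonneg _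
  have hKne : K ≠ 0 := hK.ne'
  have hαne : α ≠ 0 := hα.ne'
  refine le_min (le_min ?_ ?_) ?_
  · rw [hLHS, hv1, Finset.mul_sum, Finset.mul_sum]
    apply Finset.sum_le_sum
    intro j _
    have hlne : lam j ≠ 0 := (hlampos j).ne'
    have hbpos : (0:ℝ) < 1/(K * α * lam j) :=
      one_div_pos.mpr (mul_pos (mul_pos hK hα) (hlampos j))
    have key : F j * F j ≤ (1/(K * α * lam j)) * (1/(K * α * lam j)) :=
      mul_le_mul (hF2 j) (hF2 j) (hF0 j) hbpos.le
    have heq := myarith1 (t := (w j)^2) hKne hαne hlne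
    rw [heq]
    have h4 := mul_le_mul_of_nonneg_right key (hw2 j)
    linarith
  · rw [hLHS, hv2, Finset.mul_sum, Finset.mul_sum]
    apply Finset.sum_le_sum
    intro j _
    have hlne : lam j ≠ 0 := (hlampos j).ne'
    have key : F j * F j ≤ 1 * (1/(K * α * lam j)) :=
      mul_le_mul (hF1 j) (hF2 j) (hF0 j) zero_le_one
    have heq := myarith2 (t := (w j)^2) hKne hαne hlne
    rw [heq]
    have h4 := mul_le_mul_of_nonneg_right key (hw2 j)
    linarith
  · have hh0' : h0 = (1/2) * (Δ0 ⬝ᵥ H *ᵥ Δ0) := rfl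
    rw [hLHS, hh0', hh0, Finset.mul_sum, Finset.mul_sum]
    apply Finset.sum_le_sum
    intro j _
    have key : F j * F j ≤ 1 * 1 :=
      mul_le_mul (hF1 j) (hF1 j) (hF0 j) zero_le_one
    have h4 := mul_le_mul_of_nonneg_right key (hw2 j)
    linarith
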